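/- Let V = U₀ ⊕ ⋯ ⊕ U_d, q nonzero and not a root of unity, θ*_i = q^{d−2i}. Suppose A* : V → V satisfies (A* − θ*_i I)U_i ⊆ U_{i−1} for 0 ≤ i ≤ d (with U_{−1} = 0), and let K : V → V act on U_i as q^{d−2i}. Then (qK^{−1}A* − q^{−1}A*K^{−1})/(q − q^{−1}) = I. -/

import Mathlib

theorem stmt12 {F V : Type*} [Field F] [AddCommGroup V] [Module F V]
    [FiniteDimensional F V]
    (q : F) (hq : q ≠ 0) (hroot : ∀ n : ℕ, 0 < n → q ^ n ≠ 1)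
    (d : ℕ) (hd : 1 ≤ d) (U : ℕ → Submodule F V)
    (hbot : ∀ i, d < i → U i = ⊥)
    (hnz : ∀ i, i ≤ d → U i ≠ ⊥)
    (hind : iSupIndep U)
    (hspan : (⨆ i, U i) = ⊤)
    (Astar K Kinv : V →ₗ[F] V)
    (hKinvK : Kinv ∘ₗ K = LinearMap.id) (hKKinv : K ∘ₗ Kinv = LinearMap.id)
    (hK : ∀ i, i ≤ d → ∀ v ∈ U i, K v = q ^ ((d : ℤ) - 2 * i) • v)
    (hKinv : ∀ i, i ≤ d → ∀ v ∈ U i, Kinv v = q ^ (2 * (i : ℤ) - d) • v)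
    (hA0 : ∀ v ∈ U 0, Astar v = q ^ (d : ℤ) • v)
    (hAstar : ∀ i, 1 ≤ i → i ≤ d → ∀ v ∈ U i,
      Astar v - q ^ ((d : ℤ) - 2 * i) • v ∈ U (i - 1)) :
    (q - q⁻¹)⁻¹ • (q • (Kinv ∘ₗ Astar) - q⁻¹ • (Astar ∘ₗ Kinv)) = LinearMap.id := by
  have h2 : q ^ 2 ≠ 1 := hroot 2 (by norm_num)
  have hne : q - q⁻¹ ≠ 0 := by
    rw [sub_ne_zero]
    intro h
    apply h2
    have hm := mul_inv_cancel₀ hq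
    rw [← h] at hm
    rw [sq]; exact hm
  have key : ∀ i, ∀ v ∈ U i,
      q • Kinv (Astar v) - q⁻¹ • Astar (Kinv v) = (q - q⁻¹) • v := by
    intro i v hv
    by_cases hid : i ≤ d
    · by_cases h0 : i = 0
      · subst h0
        have hA := hA0 v hv
        have hKv := hKinv 0 (Nat.zero_le d) v hv
        have hKA : Kinv (Astar v) = q ^ ((d:ℤ)) • q ^ (2 * ((0:ℕ):ℤ) - d) • v := by
          rw [hA, map_smul, hKv]
        have hAK : Astar (Kinv v) = q ^ (2 * ((0:ℕ):ℤ) - d) • q ^ ((d:ℤ)) • v := by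
          rw [hKv, map_smul, hA]
        rw [hKA, hAK]
        simp only [smul_smul]
        have e1 : q ^ ((d : ℤ)) * q ^ (2 * ((0:ℕ) : ℤ) - d) = 1 := by
          rw [← zpow_add₀ hq, show ((d:ℤ)) + (2 * ((0:ℕ):ℤ) - d) = 0 by push_cast; ring,
            zpow_zero]
        have e1' : q ^ (2 * ((0:ℕ) : ℤ) - d) * q ^ ((d : ℤ)) = 1 := by
          rw [mul_comm]; exact e1
        rw [e1, e1', mul_one, mul_one, sub_smul]
      · have h1 : 1 ≤ i := Nat.one_le_iff_ne_zero.mpr h0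
        have hwmem := hAstar i h1 hid v hv
        set w := Astar v - q ^ ((d:ℤ) - 2*i) • v with hw
        have hAv : Astar v = q ^ ((d:ℤ) - 2*i) • v + w := by rw [hw]; abel
        have hKv : Kinv v = q ^ (2*(i:ℤ) - d) • v := hKinv i hid v hv
        have hKw : Kinv w = q ^ (2*((i-1:ℕ):ℤ) - d) • w :=
          hKinv (i-1) (le_trans (Nat.sub_le i 1) hid) w hwmem
        have hcast : ((i-1:ℕ):ℤ) = (i:ℤ) - 1 := by omega
        rw [hcast] at hKw
        have e1 : q ^ ((d:ℤ) - 2*i) * q ^ (2*(i:ℤ) - d) = 1 := by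
          rw [← zpow_add₀ hq, show ((d:ℤ) - 2*i) + (2*(i:ℤ) - d) = 0 by ring, zpow_zero]
        have e2 : q * q ^ (2*((i:ℤ) - 1) - d) = q⁻¹ * q ^ (2*(i:ℤ) - d) := by
          have : q ^ (1:ℤ) * q ^ (2*((i:ℤ) - 1) - d) = q ^ (-1:ℤ) * q ^ (2*(i:ℤ) - d) := by
            rw [← zpow_add₀ hq, ← zpow_add₀ hq]
            congr 1
            ring
          simpa [zpow_one, zpow_neg_one] using this
        have hKA : Kinv (Astar v) =
            q ^ ((d:ℤ) - 2*i) • q ^ (2*(i:ℤ) - d) • v + q ^ (2*((i:ℤ) - 1) - d) • w := by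
          rw [hAv, map_add, map_smul, hKv, hKw]
        have hAK : Astar (Kinv v) =
            q ^ (2*(i:ℤ) - d) • (q ^ ((d:ℤ) - 2*i) • v + w) := by
          rw [hKv, map_smul, hAv]
        rw [hKA, hAK]
        simp only [smul_add, smul_smul]
        rw [e1, mul_one, e2,
          mul_comm (q ^ (2*(i:ℤ) - d)) (q ^ ((d:ℤ) - 2*i)), e1, mul_one]
        module
    · have : U i = ⊥ := hbot i (by omega)
      rw [this, Submodule.mem_bot] at hv
      subst hv
      simp
  set L := (q - q⁻¹)⁻¹ • (q • (Kinv ∘ₗ Astar) - q⁻¹ • (Astar ∘ₗ Kinv)) with hL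
  ext v
  have hv : v ∈ ⨆ i, U i := hspan ▸ Submodule.mem_top
  refine Submodule.iSup_induction (motive := fun v => L v = LinearMap.id v) U hv ?_ ?_ ?_
  · intro i x hx
    simp only [hL, LinearMap.smul_apply, LinearMap.sub_apply, LinearMap.coe_comp,
      Function.comp_apply, LinearMap.id_coe, id_eq]
    rw [key i x hx, smul_smul, inv_mul_cancel₀ hne, one_smul]
  · simp
  · intro x y hx hy
    simp only [map_add, LinearMap.id_coe, id_eq] at *
    rw [hx, hy]
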